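/- Let Γ = ℤ ⋉_{φ₂} C₁₁ and Λ = ℤ ⋉_{φ₆} C₁₁, where C₁₁ is cyclic of order 11 with generator a, α is a generator of Aut(C₁₁) ≅ ℤ/10, and φ_k: ℤ → Aut(C₁₁) sends 1 to α^k. Then Γ and Λ are not isomorphic as groups, although their profinite completions are isomorphic. -/

import Mathlib

/-- The index type of finite quotients: finite-index normal subgroups. -/
def FinQuot (G : Type*) [Group G] : Type _ :=
  {N : Subgroup G // N.Normal ∧ N.FiniteIndex}

instance {G : Type*} [Group G] (N : FinQuot G) : N.1.Normal := N.2.1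
instance {G : Type*} [Group G] (N : FinQuot G) : N.1.FiniteIndex := N.2.2

instance {G : Type*} [Group G] (N : FinQuot G) : TopologicalSpace (G ⧸ N.1) := ⊥

/-- The subgroup of compatible families in the product of all finite quotients. -/
def profCompat (G : Type*) [Group G] : Subgroup (Π N : FinQuot G, G ⧸ N.1) where
  carrier := {x | ∀ (N M : FinQuot G) (h : N.1 ≤ M.1),
    QuotientGroup.map N.1 M.1 (MonoidHom.id G) (by simpa using h) (x N) = x M}
  one_mem' := by intro N M h; simp
  mul_mem' := by
    intro a b ha hb N M h
    simp only [Pi.mul_apply, map_mul, ha N M h, hb N M h]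
  inv_mem' := by
    intro a ha N M h
    simp only [Pi.inv_apply, map_inv, ha N M h]

/-- The profinite completion of a group, as the inverse limit of its finite quotients. -/
def ProfComp (G : Type*) [Group G] : Type _ := profCompat G

instance {G : Type*} [Group G] : Group (ProfComp G) :=
  inferInstanceAs (Group (profCompat G))

instance {G : Type*} [Group G] : TopologicalSpace (ProfComp G) :=
  inferInstanceAs (TopologicalSpace {x : Π N : FinQuot G, G ⧸ N.1 // x ∈ profCompat G})

/-- The canonical map from a group to its profinite completion. -/
def toProf (G : Type*) [Group G] : G →* ProfComp G where
  toFun g := ⟨fun N => QuotientGroup.mk g, by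
    intro N M h
    simp [QuotientGroup.map_mk]⟩
  map_one' := by apply Subtype.ext; funext N; rfl
  map_mul' a b := by apply Subtype.ext; funext N; rfl

/-- The pullback of a finite-index normal subgroup along a homomorphism. -/
def pullFQ {Λ Γ : Type*} [Group Λ] [Group Γ] (φ : Λ →* Γ) (N : FinQuot Γ) : FinQuot Λ :=
  ⟨N.1.comap φ, N.2.1.comap φ, ⟨by
    refine ne_zero_of_dvd_ne_zero N.2.2.index_ne_zero ?_
    rw [Subgroup.index_comap]
    exact Subgroup.relIndex_dvd_index_of_normal N.1 φ.range⟩⟩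

/-- The induced homomorphism between profinite completions. -/
def profMap {Λ Γ : Type*} [Group Λ] [Group Γ] (φ : Λ →* Γ) :
    ProfComp Λ →* ProfComp Γ where
  toFun x := ⟨fun N => QuotientGroup.map (pullFQ φ N).1 N.1 φ le_rfl (x.1 (pullFQ φ N)), by
    intro N M h
    obtain ⟨g, hg⟩ := QuotientGroup.mk_surjective (x.1 (pullFQ φ N))
    have hx := x.2 (pullFQ φ N) (pullFQ φ M) (Subgroup.comap_mono h)
    show QuotientGroup.map _ _ _ _
        (QuotientGroup.map _ _ φ _ (x.1 (pullFQ φ N))) =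
      QuotientGroup.map _ _ φ _ (x.1 (pullFQ φ M))
    rw [← hx, ← hg]
    rfl⟩
  map_one' := by
    apply Subtype.ext
    funext N
    show QuotientGroup.map _ _ φ _ ((1 : ProfComp Λ).1 (pullFQ φ N)) = _
    rw [show ((1 : ProfComp Λ).1 (pullFQ φ N)) = 1 from rfl, map_one]
    rfl
  map_mul' a b := by
    apply Subtype.ext
    funext N
    show QuotientGroup.map _ _ _ _ ((a * b).1 (pullFQ φ N)) = _
    have : (a * b).1 (pullFQ φ N) = a.1 (pullFQ φ N) * b.1 (pullFQ φ N) := rfl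
    rw [this, map_mul]
    rfl

/-- A group is residually finite if every nontrivial element survives in some finite
quotient. -/
def ResiduallyFinite (G : Type*) [Group G] : Prop :=
  ∀ g : G, g ≠ 1 → ∃ N : Subgroup G, N.Normal ∧ N.FiniteIndex ∧ g ∉ N


set_option maxHeartbeats 1000000

namespace ProfThm

section NT

open Nat

/-- `5 ^ (v₅(n) + 1)`. -/
def fiveP (n : ℕ) : ℕ := 5 ^ (n.factorization 5 + 1)

/-- the prime-to-5 part of `n`. -/
def rest (n : ℕ) : ℕ := ordCompl[5] n

lemma coprime_fiveP_rest {n : ℕ} (hn : n ≠ 0) : (fiveP n).Coprime (rest n) :=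
  Nat.Coprime.pow_left _ (Nat.coprime_ordCompl (by norm_num) hn)

lemma fiveP_odd (n : ℕ) : fiveP n % 2 = 1 :=
  Nat.odd_iff.mp (Odd.pow (by decide))

/-- an inverse of 2 modulo `fiveP n`. -/
def inv2 (n : ℕ) : ℕ := (fiveP n + 1) / 2

lemma two_mul_inv2 (n : ℕ) : 2 * inv2 n ≡ 1 [MOD fiveP n] := by
  have h2 : 2 ∣ fiveP n + 1 := by
    have := fiveP_odd n; omega
  have : 2 * inv2 n = fiveP n + 1 := Nat.mul_div_cancel' h2
  rw [this]
  simpa [Nat.ModEq] using (Nat.add_mod_left (fiveP n) 1)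

/-- coherent family of exponents congruent to 2 mod 5. -/
def uu (n : ℕ) : ℕ :=
  if hn : n = 0 then 2 else (Nat.chineseRemainder (coprime_fiveP_rest hn) 2 1).1

/-- coherent family of exponents inverse to `uu`. -/
def ww (n : ℕ) : ℕ :=
  if hn : n = 0 then 3 else (Nat.chineseRemainder (coprime_fiveP_rest hn) (inv2 n) 1).1

lemma uu_spec5 {n : ℕ} (hn : n ≠ 0) : uu n ≡ 2 [MOD fiveP n] := by
  rw [uu, dif_neg hn]; exact (Nat.chineseRemainder (coprime_fiveP_rest hn) 2 1).2.1

lemma uu_spec1 {n : ℕ} (hn : n ≠ 0) : uu n ≡ 1 [MOD rest n] := by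
  rw [uu, dif_neg hn]; exact (Nat.chineseRemainder (coprime_fiveP_rest hn) 2 1).2.2

lemma ww_spec5 {n : ℕ} (hn : n ≠ 0) : ww n ≡ inv2 n [MOD fiveP n] := by
  rw [ww, dif_neg hn]; exact (Nat.chineseRemainder (coprime_fiveP_rest hn) (inv2 n) 1).2.1

lemma ww_spec1 {n : ℕ} (hn : n ≠ 0) : ww n ≡ 1 [MOD rest n] := by
  rw [ww, dif_neg hn]; exact (Nat.chineseRemainder (coprime_fiveP_rest hn) (inv2 n) 1).2.2

/-- CRT-combine: congruence mod the 5-part and mod the rest give congruence mod `n`. -/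
lemma modeq_combine {n x y : ℕ} (h5 : x ≡ y [MOD 5 ^ (n.factorization 5)])
    (hr : x ≡ y [MOD rest n]) : x ≡ y [MOD n] := by
  rcases eq_or_ne n 0 with rfl | hn
  · have : x = y := by simpa [rest, Nat.ModEq] using hr
    simp [this]
  have hco : Nat.Coprime (5 ^ (n.factorization 5)) (rest n) :=
    Nat.Coprime.pow_left _ (Nat.coprime_ordCompl (by norm_num) hn)
  have := (Nat.modEq_and_modEq_iff_modEq_mul hco).mp ⟨h5, hr⟩
  simpa [rest, Nat.ordProj_mul_ordCompl_eq_self] using this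

lemma five_dvd_fiveP (n : ℕ) : 5 ∣ fiveP n := dvd_pow_self 5 (Nat.succ_ne_zero _)

lemma uu_mod5 (n : ℕ) : uu n ≡ 2 [MOD 5] := by
  rcases eq_or_ne n 0 with rfl | hn
  · rfl
  · exact (uu_spec5 hn).of_dvd (five_dvd_fiveP n)

lemma ww_mod5 (n : ℕ) : 2 * ww n ≡ 1 [MOD 5] := by
  rcases eq_or_ne n 0 with rfl | hn
  · decide
  · exact (((ww_spec5 hn).mul_left 2).trans (two_mul_inv2 n)).of_dvd (five_dvd_fiveP n)

lemma uu_ww_one {n : ℕ} (hn : n ≠ 0) : uu n * ww n ≡ 1 [MOD n] := by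
  have h5 : uu n * ww n ≡ 1 [MOD fiveP n] := by
    calc uu n * ww n ≡ 2 * inv2 n [MOD fiveP n] := (uu_spec5 hn).mul (ww_spec5 hn)
      _ ≡ 1 [MOD fiveP n] := two_mul_inv2 n
  have hr : uu n * ww n ≡ 1 [MOD rest n] := by
    simpa using (uu_spec1 hn).mul (ww_spec1 hn)
  exact modeq_combine (h5.of_dvd (pow_dvd_pow 5 (Nat.le_succ _))) hr

lemma uu_coherent {m n : ℕ} (hm : m ≠ 0) (hn : n ≠ 0) (hd : m ∣ n) :
    uu n ≡ uu m [MOD m] := by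
  have hval : m.factorization 5 ≤ n.factorization 5 := by
    have := Nat.ordProj_dvd_ordProj_of_dvd hn hd 5
    exact (Nat.pow_dvd_pow_iff_le_right (by norm_num)).mp this
  have h5 : uu n ≡ uu m [MOD 5 ^ (m.factorization 5)] := by
    have h1 : uu n ≡ 2 [MOD 5 ^ (m.factorization 5)] :=
      (uu_spec5 hn).of_dvd (pow_dvd_pow 5 (by omega))
    have h2 : uu m ≡ 2 [MOD 5 ^ (m.factorization 5)] :=
      (uu_spec5 hm).of_dvd (pow_dvd_pow 5 (Nat.le_succ _))
    exact h1.trans h2.symm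
  have hr : uu n ≡ uu m [MOD rest m] := by
    have h1 : uu n ≡ 1 [MOD rest m] :=
      (uu_spec1 hn).of_dvd (Nat.ordCompl_dvd_ordCompl_of_dvd hd 5)
    exact h1.trans (uu_spec1 hm).symm
  exact modeq_combine h5 hr

lemma ww_coherent {m n : ℕ} (hm : m ≠ 0) (hn : n ≠ 0) (hd : m ∣ n) :
    ww n ≡ ww m [MOD m] := by
  have hval : m.factorization 5 ≤ n.factorization 5 := by
    have := Nat.ordProj_dvd_ordProj_of_dvd hn hd 5
    exact (Nat.pow_dvd_pow_iff_le_right (by norm_num)).mp this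
  have h5 : ww n ≡ ww m [MOD 5 ^ (m.factorization 5)] := by
    have hco : Nat.gcd (5 ^ (m.factorization 5)) 2 = 1 :=
      Nat.Coprime.pow_left _ (by norm_num)
    apply Nat.ModEq.cancel_left_of_coprime hco
    have h1 : 2 * ww n ≡ 1 [MOD 5 ^ (m.factorization 5)] :=
      (((ww_spec5 hn).mul_left 2).trans (two_mul_inv2 n)).of_dvd
        (pow_dvd_pow 5 (by omega))
    have h2 : 2 * ww m ≡ 1 [MOD 5 ^ (m.factorization 5)] :=
      (((ww_spec5 hm).mul_left 2).trans (two_mul_inv2 m)).of_dvd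
        (pow_dvd_pow 5 (Nat.le_succ _))
    exact h1.trans h2.symm
  have hr : ww n ≡ ww m [MOD rest m] := by
    have h1 : ww n ≡ 1 [MOD rest m] :=
      (ww_spec1 hn).of_dvd (Nat.ordCompl_dvd_ordCompl_of_dvd hd 5)
    exact h1.trans (ww_spec1 hm).symm
  exact modeq_combine h5 hr


end NT

open SemidirectProduct Multiplicative

variable {C : Type*} [Group C]

/-- `C ⋊ ℤ` with ℤ acting through the power of a fixed automorphism. -/
abbrev SP (β : MulAut C) := C ⋊[zpowersHom (MulAut C) β] Multiplicative ℤ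

/-- The twisting homomorphism `C ⋊_β ℤ →* C ⋊_γ ℤ`, identity on `C`,
`t ↦ t^k` on `ℤ`, defined when `γ ^ k = β`. -/
def twistHom (β γ : MulAut C) (k : ℕ) (h : γ ^ k = β) : SP β →* SP γ :=
  SemidirectProduct.lift SemidirectProduct.inl
    ((SemidirectProduct.inr : Multiplicative ℤ →* SP γ).comp
      (zpowersHom (Multiplicative ℤ) (ofAdd (k : ℤ))))
    (by
      intro g
      refine MonoidHom.ext fun a => ?_
      simp only [MonoidHom.comp_apply, MulEquiv.coe_toMonoidHom, MulAut.conj_apply,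
        zpowersHom_apply]
      rw [show (inr (ofAdd (k:ℤ) ^ toAdd g) : SP γ)⁻¹
        = inr ((ofAdd (k:ℤ) ^ toAdd g)⁻¹) from (map_inv _ _).symm,
        ← SemidirectProduct.inl_aut]
      congr 1
      show (β ^ toAdd g) a = (zpowersHom (MulAut C) γ ((ofAdd (k:ℤ)) ^ toAdd g)) a
      rw [zpowersHom_apply]
      congr 1
      rw [← h]
      rw [show toAdd ((ofAdd (k:ℤ)) ^ toAdd g) = toAdd g * (k:ℤ) by
        simp [toAdd_zpow]]
      group)

@[simp] lemma twistHom_inl (β γ : MulAut C) (k : ℕ) (h : γ ^ k = β) (a : C) :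
    twistHom β γ k h (inl a) = inl a := by simp [twistHom]

@[simp] lemma twistHom_inr (β γ : MulAut C) (k : ℕ) (h : γ ^ k = β) (x : Multiplicative ℤ) :
    twistHom β γ k h (inr x) = inr ((ofAdd (k : ℤ)) ^ toAdd x) := by simp [twistHom]

lemma twistHom_inr_one (β γ : MulAut C) (k : ℕ) (h : γ ^ k = β) :
    twistHom β γ k h (inr (ofAdd 1)) = (inr (ofAdd (1:ℤ))) ^ k := by
  rw [twistHom_inr]
  rw [← map_pow]
  congr 1
  simp [← ofAdd_nsmul]

section machinery

variable (β γ : MulAut C) (U : ℕ → ℕ) (hU : ∀ n, γ ^ U n = β)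

/-- The twisted quotient homomorphism associated to a finite quotient of `SP γ`. -/
noncomputable def quotHom (N : FinQuot (SP γ)) : SP β →* (SP γ) ⧸ N.1 :=
  (QuotientGroup.mk' N.1).comp (twistHom β γ (U N.1.index) (hU _))

/-- The pulled back finite quotient. -/
noncomputable def quotKer (N : FinQuot (SP γ)) : FinQuot (SP β) :=
  ⟨(quotHom β γ U hU N).ker, MonoidHom.normal_ker _, ⟨by
    rw [Subgroup.index_ker]
    exact Nat.card_pos.ne'⟩⟩

/-- The induced map on quotients. -/
noncomputable def quotLift (N : FinQuot (SP γ)) : (SP β) ⧸ (quotKer β γ U hU N).1 →* (SP γ) ⧸ N.1 :=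
  QuotientGroup.lift _ (quotHom β γ U hU N) (fun _ hx => hx)

@[simp] lemma quotLift_mk (N : FinQuot (SP γ)) (g : SP β) :
    quotLift β γ U hU N (QuotientGroup.mk g) = quotHom β γ U hU N g := rfl

lemma orderOf_mk_inr_dvd (P : FinQuot (SP β)) :
    orderOf (QuotientGroup.mk' P.1 (inr (ofAdd (1:ℤ)))) ∣ P.1.index := by
  rw [Subgroup.index_eq_card]
  exact orderOf_dvd_natCard _

lemma quotHom_comm (hcoh : ∀ m n : ℕ, m ≠ 0 → n ≠ 0 → m ∣ n → U n ≡ U m [MOD m]) {N M : FinQuot (SP γ)} (h : N.1 ≤ M.1) :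
    (QuotientGroup.map N.1 M.1 (MonoidHom.id _) (by simpa using h)).comp (quotHom β γ U hU N)
      = quotHom β γ U hU M := by
  apply SemidirectProduct.hom_ext
  · ext a
    simp [quotHom, QuotientGroup.map_mk]
  · apply MonoidHom.ext_mint
    simp only [MonoidHom.comp_apply, quotHom, twistHom_inr_one, map_pow,
      QuotientGroup.map_mk', MonoidHom.id_apply]
    show (QuotientGroup.mk' M.1 (inr (ofAdd (1:ℤ)))) ^ (U N.1.index)
      = (QuotientGroup.mk' M.1 (inr (ofAdd (1:ℤ)))) ^ (U M.1.index)
    rw [pow_eq_pow_iff_modEq]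
    have hdvd : M.1.index ∣ N.1.index := Subgroup.index_dvd_of_le h
    exact ((hcoh M.1.index N.1.index M.2.2.index_ne_zero N.2.2.index_ne_zero hdvd).of_dvd
      (orderOf_mk_inr_dvd γ M))

lemma quotKer_le (hcoh : ∀ m n : ℕ, m ≠ 0 → n ≠ 0 → m ∣ n → U n ≡ U m [MOD m]) {N M : FinQuot (SP γ)} (h : N.1 ≤ M.1) :
    (quotKer β γ U hU N).1 ≤ (quotKer β γ U hU M).1 := by
  intro g hg
  show g ∈ (quotHom β γ U hU M).ker
  rw [← quotHom_comm β γ U hU hcoh h]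
  simp only [MonoidHom.mem_ker, MonoidHom.comp_apply]
  rw [show quotHom β γ U hU N g = 1 from hg]
  simp

/-- The induced homomorphism on profinite completions. -/
noncomputable def profF (hcoh : ∀ m n : ℕ, m ≠ 0 → n ≠ 0 → m ∣ n → U n ≡ U m [MOD m]) : ProfComp (SP β) →* ProfComp (SP γ) where
  toFun x := ⟨fun N => quotLift β γ U hU N (x.1 (quotKer β γ U hU N)), by
    intro N M h
    obtain ⟨g, hg⟩ := QuotientGroup.mk_surjective (x.1 (quotKer β γ U hU N))
    have hx := x.2 (quotKer β γ U hU N) (quotKer β γ U hU M) (quotKer_le β γ U hU hcoh h)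
    show (QuotientGroup.map N.1 M.1 (MonoidHom.id _) _)
        (quotLift β γ U hU N (x.1 (quotKer β γ U hU N)))
      = quotLift β γ U hU M (x.1 (quotKer β γ U hU M))
    rw [← hg] at hx
    rw [← hg, ← hx, QuotientGroup.map_mk, quotLift_mk, quotLift_mk]
    have := DFunLike.congr_fun (quotHom_comm β γ U hU hcoh h) g
    simpa using this⟩
  map_one' := by
    apply Subtype.ext; funext N
    show quotLift β γ U hU N ((1 : ProfComp (SP β)).1 (quotKer β γ U hU N)) = 1
    rw [show ((1 : ProfComp (SP β)).1 (quotKer β γ U hU N)) = 1 from rfl, map_one]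
  map_mul' a b := by
    apply Subtype.ext; funext N
    show quotLift β γ U hU N ((a * b).1 (quotKer β γ U hU N)) = _
    rw [show ((a * b).1 (quotKer β γ U hU N))
      = a.1 (quotKer β γ U hU N) * b.1 (quotKer β γ U hU N) from rfl, map_mul]
    rfl

lemma quotLift_injective (N : FinQuot (SP γ)) : Function.Injective (quotLift β γ U hU N) := by
  refine (injective_iff_map_eq_one (quotLift β γ U hU N)).mpr ?_
  intro y h1
  obtain ⟨g, rfl⟩ := QuotientGroup.mk_surjective y
  rw [quotLift_mk] at h1
  exact (QuotientGroup.eq_one_iff g).mpr h1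

end machinery

section inversion

variable (β γ : MulAut C) (U W : ℕ → ℕ)

lemma quotHom_surjective (hW : ∀ n, β ^ W n = γ) (hUW : ∀ n, n ≠ 0 → U n * W n ≡ 1 [MOD n]) (P : FinQuot (SP β)) :
    Function.Surjective (quotHom γ β W hW P) := by
  have hy0 : (QuotientGroup.mk' P.1) (inr (ofAdd (1:ℤ))) ∈ (quotHom γ β W hW P).range := by
    refine ⟨inr (ofAdd (1:ℤ)) ^ U P.1.index, ?_⟩
    rw [map_pow]
    rw [show quotHom γ β W hW P (inr (ofAdd 1))
        = (QuotientGroup.mk' P.1 (inr (ofAdd (1:ℤ)))) ^ (W P.1.index) by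
      rw [quotHom, MonoidHom.comp_apply, twistHom_inr_one, map_pow]]
    rw [← pow_mul]
    have hmod : W P.1.index * U P.1.index ≡ 1
        [MOD orderOf (QuotientGroup.mk' P.1 (inr (ofAdd (1:ℤ))))] := by
      refine Nat.ModEq.of_dvd (orderOf_mk_inr_dvd β P) ?_
      rw [mul_comm]
      exact hUW P.1.index P.2.2.index_ne_zero
    have := pow_eq_pow_iff_modEq.mpr hmod
    simpa using this
  intro y
  obtain ⟨g, rfl⟩ := QuotientGroup.mk'_surjective P.1 y
  have hmem : (QuotientGroup.mk' P.1) g ∈ (quotHom γ β W hW P).range := by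
    rw [← SemidirectProduct.inl_left_mul_inr_right g, map_mul]
    refine Subgroup.mul_mem _ ⟨inl g.left, by simp [quotHom]⟩ ?_
    have hzp : (QuotientGroup.mk' P.1) (inr g.right)
        = ((QuotientGroup.mk' P.1) (inr (ofAdd (1:ℤ)))) ^ (toAdd g.right) := by
      rw [← map_zpow, ← map_zpow]
      congr 1
      rw [show (ofAdd (1:ℤ)) ^ (toAdd g.right) = ofAdd (toAdd g.right) by
        simp [← ofAdd_zsmul]]
      simp
    rw [hzp]
    exact Subgroup.zpow_mem _ hy0 _
  exact hmem

lemma quotKer_index (hW : ∀ n, β ^ W n = γ) (hUW : ∀ n, n ≠ 0 → U n * W n ≡ 1 [MOD n]) (P : FinQuot (SP β)) :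
    (quotKer γ β W hW P).1.index = P.1.index := by
  show (quotHom γ β W hW P).ker.index = P.1.index
  rw [Subgroup.index_ker,
    MonoidHom.range_eq_top.mpr (quotHom_surjective β γ U W hW hUW P),
    Subgroup.card_top, Subgroup.index_eq_card]

lemma profF_left_inverse
    (hU : ∀ n, γ ^ U n = β) (hW : ∀ n, β ^ W n = γ)
    (hcohU : ∀ m n : ℕ, m ≠ 0 → n ≠ 0 → m ∣ n → U n ≡ U m [MOD m])
    (hcohW : ∀ m n : ℕ, m ≠ 0 → n ≠ 0 → m ∣ n → W n ≡ W m [MOD m])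
    (hUW : ∀ n, n ≠ 0 → U n * W n ≡ 1 [MOD n])
    (x : ProfComp (SP β)) :
    profF γ β W hW hcohW (profF β γ U hU hcohU x) = x := by
  apply Subtype.ext; funext P
  show quotLift γ β W hW P
      (quotLift β γ U hU (quotKer γ β W hW P)
        (x.1 (quotKer β γ U hU (quotKer γ β W hW P)))) = x.1 P
  set L : FinQuot (SP γ) := quotKer γ β W hW P with hLdef
  have hidx : L.1.index = P.1.index := quotKer_index β γ U W hW hUW P
  have claimA : (quotHom γ β W hW P).comp (twistHom β γ (U L.1.index) (hU _))
      = QuotientGroup.mk' P.1 := by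
    apply SemidirectProduct.hom_ext
    · ext a
      simp [quotHom]
    · apply MonoidHom.ext_mint
      simp only [MonoidHom.comp_apply]
      rw [twistHom_inr_one, map_pow]
      rw [show quotHom γ β W hW P (inr (ofAdd 1))
          = (QuotientGroup.mk' P.1 (inr (ofAdd (1:ℤ)))) ^ (W P.1.index) by
        rw [quotHom, MonoidHom.comp_apply, twistHom_inr_one, map_pow]]
      rw [← pow_mul, hidx]
      have hmod : W P.1.index * U P.1.index ≡ 1
          [MOD orderOf (QuotientGroup.mk' P.1 (inr (ofAdd (1:ℤ))))] := by
        refine Nat.ModEq.of_dvd (orderOf_mk_inr_dvd β P) ?_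
        rw [mul_comm]
        exact hUW P.1.index P.2.2.index_ne_zero
      have := pow_eq_pow_iff_modEq.mpr hmod
      simpa using this
  have claimB : ∀ g : SP β,
      quotLift γ β W hW P (quotHom β γ U hU L g) = QuotientGroup.mk' P.1 g := by
    intro g
    have h1 : quotHom β γ U hU L g
        = QuotientGroup.mk (twistHom β γ (U L.1.index) (hU _) g) := rfl
    rw [h1, quotLift_mk]
    exact DFunLike.congr_fun claimA g
  have hker : (quotKer β γ U hU L).1 = P.1 := by
    show (quotHom β γ U hU L).ker = P.1
    ext g
    constructor
    · intro hg
      have h1 : quotHom β γ U hU L g = 1 := hg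
      have := claimB g
      rw [h1, map_one] at this
      exact (QuotientGroup.eq_one_iff g).mp this.symm
    · intro hg
      have h1 : QuotientGroup.mk' P.1 g = 1 := (QuotientGroup.eq_one_iff g).mpr hg
      have h2 : quotLift γ β W hW P (quotHom β γ U hU L g) = quotLift γ β W hW P 1 := by
        rw [map_one, claimB g, h1]
      exact quotLift_injective γ β W hW P h2
  have hle : (quotKer β γ U hU L).1 ≤ P.1 := le_of_eq hker
  have hx := x.2 (quotKer β γ U hU L) P hle
  obtain ⟨g, hg⟩ := QuotientGroup.mk_surjective (x.1 (quotKer β γ U hU L))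
  rw [← hg, quotLift_mk, claimB g]
  rw [← hg, QuotientGroup.map_mk] at hx
  simpa using hx

end inversion


open SemidirectProduct Multiplicative

abbrev C11 := Multiplicative (ZMod 11)

lemma gen_pow (x : C11) : (ofAdd (1 : ZMod 11)) ^ (toAdd x).val = x := by
  rw [← ofAdd_nsmul]
  simp [nsmul_eq_mul, ZMod.natCast_val, ZMod.cast_id]

lemma endo_pow (σ : C11 →* C11) (x : C11) :
    σ x = x ^ (toAdd (σ (ofAdd (1 : ZMod 11)))).val := by
  set c := (toAdd (σ (ofAdd (1 : ZMod 11)))).val with hc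
  have h1 : σ (ofAdd (1 : ZMod 11)) = (ofAdd (1 : ZMod 11)) ^ c := (gen_pow _).symm
  calc σ x = σ ((ofAdd (1 : ZMod 11)) ^ (toAdd x).val) := by rw [gen_pow]
    _ = (σ (ofAdd (1 : ZMod 11))) ^ (toAdd x).val := map_pow σ _ _
    _ = ((ofAdd (1 : ZMod 11)) ^ c) ^ (toAdd x).val := by rw [h1]
    _ = ((ofAdd (1 : ZMod 11)) ^ (toAdd x).val) ^ c := by
        rw [← pow_mul, mul_comm, pow_mul]
    _ = x ^ c := by rw [gen_pow]

lemma endo_comm (σ τ : C11 →* C11) (x : C11) : σ (τ x) = τ (σ x) := by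
  rw [endo_pow σ (τ x), endo_pow τ x, endo_pow τ (σ x), endo_pow σ x,
    ← pow_mul, ← pow_mul, mul_comm]

lemma c11_pow_eleven (a : C11) : a ^ 11 = 1 := by
  have : toAdd (a ^ 11) = 0 := by
    rw [toAdd_pow]
    have h11 : (11 : ZMod 11) = 0 := by decide
    simp only [nsmul_eq_mul, Nat.cast_ofNat, h11, zero_mul]
  calc a ^ 11 = ofAdd (toAdd (a ^ 11)) := (ofAdd_toAdd _).symm
    _ = ofAdd 0 := by rw [this]
    _ = 1 := ofAdd_zero

lemma mint_eleven (y : Multiplicative ℤ) (h : y ^ 11 = 1) : y = 1 := by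
  have h0 : toAdd (y ^ 11) = 0 := by rw [h]; rfl
  rw [toAdd_pow] at h0
  simp only [nsmul_eq_mul, Nat.cast_ofNat] at h0
  have : toAdd y = 0 := by omega
  have h2 := congrArg ofAdd this
  simpa using h2

section part1

variable (α : MulAut C11) (hα : orderOf α = 10)

lemma right_of_inl {β γ : MulAut C11}
    (ψ : (C11 ⋊[zpowersHom (MulAut C11) β] Multiplicative ℤ) →*
      (C11 ⋊[zpowersHom (MulAut C11) γ] Multiplicative ℤ)) (a : C11) :
    rightHom (ψ (inl a)) = 1 := by
  apply mint_eleven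
  rw [← map_pow, ← map_pow, ← map_pow, c11_pow_eleven, map_one, map_one, map_one]

lemma eq_inl_of_right_eq_one {γ : MulAut C11}
    {x : C11 ⋊[zpowersHom (MulAut C11) γ] Multiplicative ℤ}
    (h : rightHom x = 1) : x = inl x.left := by
  conv_lhs => rw [← SemidirectProduct.inl_left_mul_inr_right x]
  rw [show x.right = (1 : Multiplicative ℤ) from h, map_one, mul_one]

theorem not_iso (hα : orderOf α = 10) :
    IsEmpty ((C11 ⋊[zpowersHom (MulAut C11) (α ^ 2)] Multiplicative ℤ) ≃*
      (C11 ⋊[zpowersHom (MulAut C11) (α ^ 6)] Multiplicative ℤ)) := by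
  constructor
  intro f
  -- the restriction of f to C11
  have hIl : ∀ a : C11, f (inl a) = inl ((f (inl a)).left) := by
    intro a
    exact eq_inl_of_right_eq_one (right_of_inl f.toMonoidHom a)
  set σ : C11 → C11 := fun a => (f (inl a)).left with hσ
  have hfσ : ∀ a : C11, f (inl a) = inl (σ a) := hIl
  -- the restriction of f.symm to C11
  have hIl' : ∀ a : C11, f.symm (inl a) = inl ((f.symm (inl a)).left) := by
    intro a
    exact eq_inl_of_right_eq_one (right_of_inl f.symm.toMonoidHom a)
  set τ : C11 → C11 := fun a => (f.symm (inl a)).left with hτ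
  have hστ : ∀ b : C11, σ (τ b) = b := by
    intro b
    have : f (inl (τ b)) = inl b := by
      rw [← hIl' b, MulEquiv.apply_symm_apply]
    have h2 := hfσ (τ b)
    rw [this] at h2
    exact (SemidirectProduct.inl_inj.mp h2).symm
  have hσsurj : Function.Surjective σ := fun b => ⟨τ b, hστ b⟩
  -- σ as a monoid hom
  have hσmul : ∀ a b : C11, σ (a * b) = σ a * σ b := by
    intro a b
    apply SemidirectProduct.inl_injective (φ := zpowersHom (MulAut C11) (α ^ 6))
    rw [map_mul, ← hfσ, ← hfσ, ← hfσ, map_mul, map_mul]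
  set σh : C11 →* C11 := MonoidHom.mk' σ hσmul with hσh
  -- the image of the generator of ℤ
  set S := f (inr (ofAdd (1:ℤ))) with hS
  set m := toAdd (rightHom S) with hm
  -- m is ±1
  have hunit : IsUnit m := by
    set g := f.symm (inr (ofAdd (1:ℤ))) with hgdef
    have hq : rightHom (f g) = ofAdd (1:ℤ) := by
      rw [hgdef, MulEquiv.apply_symm_apply]
      exact rightHom_inr _
    have hgdec : (g : C11 ⋊[zpowersHom (MulAut C11) (α ^ 2)] Multiplicative ℤ)
        = inl g.left * inr g.right := (SemidirectProduct.inl_left_mul_inr_right g).symm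
    have hinr : inr g.right = (inr (ofAdd (1:ℤ)) :
        C11 ⋊[zpowersHom (MulAut C11) (α ^ 2)] Multiplicative ℤ) ^ (toAdd g.right) := by
      rw [← map_zpow]
      congr 1
      rw [show (ofAdd (1:ℤ)) ^ (toAdd g.right) = ofAdd (toAdd g.right) by
        simp [← ofAdd_zsmul]]
      simp only [ofAdd_toAdd]
    have : ofAdd (1:ℤ) = (rightHom S) ^ (toAdd g.right) * rightHom (f (inl g.left)) := by
      rw [← hq]
      conv_lhs => rw [hgdec]
      rw [hinr, map_mul, map_zpow, map_mul, map_zpow, mul_comm]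
    have hz : rightHom (f (inl g.left)) = 1 := right_of_inl f.toMonoidHom g.left
    rw [hz, mul_one] at this
    have htoadd := congrArg toAdd this
    simp only [toAdd_zpow, toAdd_ofAdd, smul_eq_mul] at htoadd
    exact IsUnit.of_mul_eq_one (a := m) (toAdd g.right) (by rw [mul_comm] at htoadd; exact htoadd.symm)
  -- conjugation relation
  have hconj : ∀ a : C11, σ ((α ^ 2) a) = ((α ^ 6) ^ m) (σ a) := by
    intro a
    have hrel : (inl ((α ^ 2) a) : C11 ⋊[zpowersHom (MulAut C11) (α ^ 2)] Multiplicative ℤ)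
        = inr (ofAdd (1:ℤ)) * inl a * (inr (ofAdd (1:ℤ)))⁻¹ := by
      have := SemidirectProduct.inl_aut (φ := zpowersHom (MulAut C11) (α ^ 2))
        (ofAdd (1:ℤ)) a
      rw [map_inv] at this
      simpa using this
    have happ := congrArg f hrel
    rw [hfσ, map_mul, map_mul, map_inv, hfσ, ← hS] at happ
    -- decompose S
    have hSdec : S = inl S.left * inr (ofAdd m) := by
      conv_lhs => rw [← SemidirectProduct.inl_left_mul_inr_right S]
      congr 1
    rw [hSdec] at happ
    have hc : ∀ c : C11, ∀ y : C11,
        (inl c * inr (ofAdd m)) * inl y * (inl c * inr (ofAdd m))⁻¹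
          = (inl (((α ^ 6) ^ m) y) :
            C11 ⋊[zpowersHom (MulAut C11) (α ^ 6)] Multiplicative ℤ) := by
      intro c y
      have h1 : (inr (ofAdd m) : C11 ⋊[zpowersHom (MulAut C11) (α ^ 6)] Multiplicative ℤ)
          * inl y * (inr (ofAdd m))⁻¹ = inl ((zpowersHom (MulAut C11) (α ^ 6) (ofAdd m)) y) := by
        have := SemidirectProduct.inl_aut (φ := zpowersHom (MulAut C11) (α ^ 6)) (ofAdd m) y
        rw [map_inv] at this
        exact this.symm
      rw [mul_inv_rev, show (inl c * inr (ofAdd m)) * inl y * ((inr (ofAdd m))⁻¹ * (inl c)⁻¹)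
          = inl c * (inr (ofAdd m) * inl y * (inr (ofAdd m))⁻¹) * (inl c)⁻¹ by group, h1]
      rw [← map_inv, ← map_mul, ← map_mul]
      congr 1
      have : (zpowersHom (MulAut C11) (α ^ 6) (ofAdd m)) y = ((α ^ 6) ^ m) y := by
        simp [zpowersHom_apply]
      rw [this, mul_comm c _, mul_assoc, mul_inv_cancel, mul_one]
    rw [hc (S.left) (σ a)] at happ
    exact SemidirectProduct.inl_inj.mp happ
  -- commutation gives α^2 = (α^6)^m on all of C11
  have hkey : ∀ b : C11, (α ^ 2) b = ((α ^ 6) ^ m) b := by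
    intro b
    obtain ⟨a, rfl⟩ := hσsurj b
    have hcomm : σ ((α ^ 2) a) = (α ^ 2) (σ a) := by
      have := endo_comm σh ((α ^ 2) : MulAut C11).toMonoidHom a
      simpa [hσh] using this
    rw [← hcomm, hconj a]
  rcases Int.isUnit_iff.mp hunit with h1 | h1
  · have : (α : MulAut C11) ^ 2 = α ^ 6 := by
      apply MulEquiv.ext
      intro b
      have := hkey b
      rw [h1, zpow_one] at this
      exact this
    rw [pow_eq_pow_iff_modEq, hα] at this
    exact absurd this (by decide)
  · have h8 : (α : MulAut C11) ^ 2 = (α ^ 6)⁻¹ := by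
      apply MulEquiv.ext
      intro b
      have := hkey b
      rw [h1, zpow_neg, zpow_one] at this
      exact this
    have : (α : MulAut C11) ^ 8 = 1 := by
      have := congrArg (fun x => x * α ^ 6) h8
      simp only [inv_mul_cancel] at this
      rw [← pow_add] at this
      exact this
    have hdvd := orderOf_dvd_of_pow_eq_one this
    rw [hα] at hdvd
    omega

end part1

section final

variable (α : MulAut C11) (hα : orderOf α = 10)

lemma alpha_pow_eq {a b : ℕ} (hα : orderOf α = 10) (h : a ≡ b [MOD 10]) :
    α ^ a = α ^ b := by
  rw [pow_eq_pow_iff_modEq, hα]; exact h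

lemma hU6 (hα : orderOf α = 10) : ∀ n, (α ^ 6) ^ (uu n) = α ^ 2 := by
  intro n
  rw [← pow_mul]
  apply alpha_pow_eq α hα
  have h1 : 6 * uu n ≡ 6 * 2 [MOD 6 * 5] := (uu_mod5 n).mul_left' 6
  have h2 : 6 * uu n ≡ 6 * 2 [MOD 10] := h1.of_dvd (by norm_num)
  exact h2.trans (by decide)

lemma hW2 (hα : orderOf α = 10) : ∀ n, (α ^ 2) ^ (ww n) = α ^ 6 := by
  intro n
  rw [← pow_mul]
  apply alpha_pow_eq α hα
  have h3 : ww n ≡ 3 [MOD 5] := by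
    have h1 : 2 * ww n ≡ 2 * 3 [MOD 5] := (ww_mod5 n).trans (by decide)
    exact Nat.ModEq.cancel_left_of_coprime (by norm_num) h1
  have h4 : 2 * ww n ≡ 2 * 3 [MOD 2 * 5] := h3.mul_left' 2
  exact h4.trans (by decide)

/-- The isomorphism between the profinite completions. -/
noncomputable def theEquiv (hα : orderOf α = 10) :
    ProfComp (SP (α ^ 2)) ≃* ProfComp (SP (α ^ 6)) :=
  { toFun := profF (α ^ 2) (α ^ 6) uu (hU6 α hα)
      (fun m n hm hn hd => uu_coherent hm hn hd),
    invFun := profF (α ^ 6) (α ^ 2) ww (hW2 α hα)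
      (fun m n hm hn hd => ww_coherent hm hn hd),
    left_inv := profF_left_inverse (α ^ 2) (α ^ 6) uu ww (hU6 α hα) (hW2 α hα)
      (fun m n hm hn hd => uu_coherent hm hn hd)
      (fun m n hm hn hd => ww_coherent hm hn hd)
      (fun n hn => uu_ww_one hn),
    right_inv := profF_left_inverse (α ^ 6) (α ^ 2) ww uu (hW2 α hα) (hU6 α hα)
      (fun m n hm hn hd => ww_coherent hm hn hd)
      (fun m n hm hn hd => uu_coherent hm hn hd)
      (fun n hn => by rw [mul_comm]; exact uu_ww_one hn),
    map_mul' := map_mul _ }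

end final

end ProfThm

/-- Let `α` be a generator of `Aut(C₁₁) ≅ ℤ/10`.  The semidirect products
`ℤ ⋉_{α²} C₁₁` and `ℤ ⋉_{α⁶} C₁₁` are not isomorphic as groups, although their
profinite completions are isomorphic. -/
theorem semidirect_c11_not_isomorphic_profinitely_isomorphic
    (α : MulAut (Multiplicative (ZMod 11))) (hα : orderOf α = 10) :
    IsEmpty ((Multiplicative (ZMod 11)) ⋊[zpowersHom (MulAut (Multiplicative (ZMod 11))) (α ^ 2)] Multiplicative ℤ ≃*
      (Multiplicative (ZMod 11)) ⋊[zpowersHom (MulAut (Multiplicative (ZMod 11))) (α ^ 6)] Multiplicative ℤ) ∧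
    Nonempty (ProfComp ((Multiplicative (ZMod 11)) ⋊[zpowersHom (MulAut (Multiplicative (ZMod 11))) (α ^ 2)] Multiplicative ℤ) ≃*
      ProfComp ((Multiplicative (ZMod 11)) ⋊[zpowersHom (MulAut (Multiplicative (ZMod 11))) (α ^ 6)] Multiplicative ℤ)) := by
  constructor
  · exact ProfThm.not_iso α hα
  · exact ⟨ProfThm.theEquiv α hα⟩
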